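/- Let Λ be a rank-n lattice in ℝⁿ, Π a hyperplane through the origin, and R the orthogonal reflection in Π. If ΛR = Λ, then Λ₀ = Λ ∩ Π is a lattice of rank n−1, and Λ is the union over k ∈ ℤ of the translates Λ₀ + kw, for any w ∈ Λ \ Π at minimum positive distance from Π. -/

import Mathlib

open Metric

set_option maxHeartbeats 1000000 in
/-- If a full-rank lattice `Λ` in `ℝⁿ` is preserved by the reflection `R` in a hyperplane
`Pl` through the origin, then `Λ₀ = Λ ∩ Pl` is a rank-`(n-1)` lattice and
`Λ = ⋃_{k ∈ ℤ} (Λ₀ + k w)` for any `w ∈ Λ \ Pl` at minimum (positive) distance from `Pl`. -/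
theorem lattice_reflection_layers (n : ℕ)
    (L : AddSubgroup (EuclideanSpace ℝ (Fin n)))
    (hL : ∃ b : Fin n → EuclideanSpace ℝ (Fin n),
      LinearIndependent ℝ b ∧ L = AddSubgroup.closure (Set.range b))
    (Pl : Submodule ℝ (EuclideanSpace ℝ (Fin n)))
    (hPl : Module.finrank ℝ Pl = n - 1)
    (hinv : ∀ x, x ∈ L ↔ Pl.reflection x ∈ L) :
    (∃ c : Fin (n - 1) → EuclideanSpace ℝ (Fin n), LinearIndependent ℝ c ∧
        L ⊓ Pl.toAddSubgroup = AddSubgroup.closure (Set.range c)) ∧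
    ∀ w, w ∈ L → w ∉ Pl →
      (∀ y ∈ L, y ∉ Pl → infDist w (Pl : Set (EuclideanSpace ℝ (Fin n))) ≤
        infDist y (Pl : Set (EuclideanSpace ℝ (Fin n)))) →
      ∀ x, x ∈ L ↔ ∃ k : ℤ, x - k • w ∈ L ⊓ Pl.toAddSubgroup := by
  open Submodule Module RealInnerProductSpace in
  obtain ⟨b, hb, hLb⟩ := hL
  rcases Nat.eq_zero_or_pos n with hn0 | hn
  · subst hn0
    haveI : IsEmpty (Fin (0 - 1)) := ⟨fun i => absurd i.isLt (by omega)⟩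
    constructor
    · refine ⟨fun _ => 0, linearIndependent_empty_type, ?_⟩
      ext x
      have hx0 : x = 0 := Subsingleton.elim x 0
      subst hx0
      constructor <;> intro _ <;> exact AddSubgroup.zero_mem _
    · intro w hwL hwPl _
      refine absurd ?_ hwPl
      rw [Subsingleton.elim w (0 : EuclideanSpace ℝ (Fin 0))]
      exact Pl.zero_mem
  haveI : Nonempty (Fin n) := ⟨⟨0, hn⟩⟩
  have hcard : Fintype.card (Fin n) = finrank ℝ (EuclideanSpace ℝ (Fin n)) := by simp
  set B := basisOfLinearIndependentOfCardEqFinrank hb hcard with hBdef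
  have hBb : ⇑B = b := coe_basisOfLinearIndependentOfCardEqFinrank hb hcard
  set Lz : Submodule ℤ (EuclideanSpace ℝ (Fin n)) := span ℤ (Set.range b) with hLzdef
  have hLz : L = Lz.toAddSubgroup := by
    rw [hLb, hLzdef, Submodule.span_int_eq_addSubgroupClosure]
  haveI hdisc : DiscreteTopology Lz := by
    rw [hLzdef, ← hBb]; infer_instance
  have hmemL : ∀ x, x ∈ L ↔ x ∈ Lz := fun x => by rw [hLz]; exact Iff.rfl
  have hRmem : ∀ x ∈ L, Pl.reflection x ∈ L := fun x hx => (hinv x).mp hx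
  have hproj2 : ∀ x : EuclideanSpace ℝ (Fin n),
      x + Pl.reflection x
        = (orthogonalProjection Pl x : EuclideanSpace ℝ (Fin n))
          + (orthogonalProjection Pl x : EuclideanSpace ℝ (Fin n)) := by
    intro x
    rw [Submodule.reflection_apply (K := Pl) x, Submodule.starProjection_apply, two_smul]
    abel
  have hsub2 : ∀ x : EuclideanSpace ℝ (Fin n),
      x - Pl.reflection x
        = (x - (orthogonalProjection Pl x : EuclideanSpace ℝ (Fin n)))
          + (x - (orthogonalProjection Pl x : EuclideanSpace ℝ (Fin n))) := by
    intro x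
    rw [Submodule.reflection_apply (K := Pl) x, Submodule.starProjection_apply, two_smul]
    abel
  constructor
  · -- Part 1
    set j : ↥Pl →ₗ[ℤ] EuclideanSpace ℝ (Fin n) := Pl.subtype.restrictScalars ℤ with hj
    set L0 : Submodule ℤ ↥Pl := Lz.comap j with hL0
    haveI : DiscreteTopology L0 := by
      refine DiscreteTopology.of_continuous_injective
        (f := fun x : L0 => (⟨(x : ↥Pl), x.2⟩ : Lz)) ?_ ?_
      · exact Continuous.subtype_mk (continuous_subtype_val.comp continuous_subtype_val) _
      · intro x y hxy
        have h : ((x : ↥Pl) : EuclideanSpace ℝ (Fin n)) = ((y : ↥Pl) : EuclideanSpace ℝ (Fin n)) :=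
          congrArg (fun z : ↥Lz => (z : EuclideanSpace ℝ (Fin n))) hxy
        exact Subtype.ext (Subtype.ext h)
    have hprsur : ∀ z : ↥Pl, orthogonalProjection Pl (z : EuclideanSpace ℝ (Fin n)) = z :=
      fun z => orthogonalProjection_mem_subspace_eq_self z
    have hprspan : ∀ i, orthogonalProjection Pl (b i) ∈ span ℝ (L0 : Set ↥Pl) := by
      intro i
      have hbL : b i ∈ L := by rw [hLb]; exact AddSubgroup.subset_closure (Set.mem_range_self i)
      have h1 : b i + Pl.reflection (b i) ∈ L := L.add_mem hbL (hRmem _ hbL)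
      have h2 : b i + Pl.reflection (b i) ∈ Pl := by
        rw [hproj2 (b i)]
        exact Pl.add_mem (coe_mem _) (coe_mem _)
      have hel : (⟨b i + Pl.reflection (b i), h2⟩ : ↥Pl) ∈ L0 := by
        simp only [hL0, Submodule.mem_comap]
        exact (hmemL _).mp h1
      have heq : orthogonalProjection Pl (b i)
          = (2:ℝ)⁻¹ • (⟨b i + Pl.reflection (b i), h2⟩ : ↥Pl) := by
        apply Subtype.ext
        rw [Submodule.coe_smul]
        show (orthogonalProjection Pl (b i) : EuclideanSpace ℝ (Fin n))
          = (2:ℝ)⁻¹ • (b i + Pl.reflection (b i))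
        rw [hproj2 (b i)]
        module
      rw [heq]
      exact Submodule.smul_mem _ _ (Submodule.subset_span hel)
    haveI : IsZLattice ℝ L0 := by
      refine ⟨?_⟩
      rw [eq_top_iff]
      rintro z -
      have htop : span ℝ (Set.range b) = ⊤ := by rw [← hBb]; exact B.span_eq
      have h1 : Submodule.map (orthogonalProjection Pl).toLinearMap (span ℝ (Set.range b))
          ≤ span ℝ (L0 : Set ↥Pl) := by
        rw [Submodule.map_span]
        refine span_le.mpr ?_
        rintro _ ⟨_, ⟨i, rfl⟩, rfl⟩
        exact hprspan i
      refine h1 ?_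
      rw [htop, Submodule.map_top]
      exact LinearMap.mem_range.mpr ⟨z, hprsur z⟩
    haveI : Module.Finite ℤ L0 := ZLattice.module_finite ℝ L0
    haveI : Module.Free ℤ L0 := ZLattice.module_free ℝ L0
    have hrank : finrank ℤ L0 = n - 1 := by rw [ZLattice.rank ℝ L0, hPl]
    have hcardi : Fintype.card (Module.Free.ChooseBasisIndex ℤ ↥L0) = n - 1 := by
      rw [← Module.finrank_eq_card_chooseBasisIndex, hrank]
    set b1 := (Module.Free.chooseBasis ℤ L0).reindex (Fintype.equivFinOfCardEq hcardi) with hb1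
    set cP := b1.ofZLatticeBasis ℝ L0 with hcP
    have hcPspan : span ℤ (Set.range ⇑cP) = L0 := b1.ofZLatticeBasis_span ℝ
    refine ⟨fun i => (cP i : EuclideanSpace ℝ (Fin n)), ?_, ?_⟩
    · exact cP.linearIndependent.map' Pl.subtype (Submodule.ker_subtype Pl)
    · rw [← Submodule.span_int_eq_addSubgroupClosure]
      have hmap : span ℤ (Set.range fun i => ((cP i : EuclideanSpace ℝ (Fin n))))
          = Submodule.map j (span ℤ (Set.range ⇑cP)) := by
        rw [Submodule.map_span]
        congr 1
        ext x
        constructor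
        · rintro ⟨i, rfl⟩; exact ⟨cP i, ⟨i, rfl⟩, rfl⟩
        · rintro ⟨_, ⟨i, rfl⟩, rfl⟩; exact ⟨i, rfl⟩
      ext x
      rw [AddSubgroup.mem_inf, Submodule.mem_toAddSubgroup, Submodule.mem_toAddSubgroup,
        hmap, hcPspan]
      constructor
      · rintro ⟨hxL, hxPl⟩
        exact Submodule.mem_map.mpr ⟨⟨x, hxPl⟩, (hmemL x).mp hxL, rfl⟩
      · rintro ⟨y, hy, rfl⟩
        exact ⟨(hmemL _).mpr hy, (y : ↥Pl).2⟩
  · -- Part 2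
    intro w hwL hwPl hmin x
    have hfr : finrank ℝ Plᗮ = 1 := by
      have h1 := Submodule.finrank_add_finrank_orthogonal (K := Pl)
      rw [hPl, finrank_euclideanSpace_fin] at h1
      omega
    obtain ⟨v0, hv0ne, hv0span⟩ := finrank_eq_one_iff'.mp hfr
    have hv0norm : ‖(v0 : EuclideanSpace ℝ (Fin n))‖ ≠ 0 := by
      simpa [Submodule.coe_eq_zero] using hv0ne
    set u : EuclideanSpace ℝ (Fin n) := ‖(v0 : EuclideanSpace ℝ (Fin n))‖⁻¹ • ↑v0 with hu
    have hunorm : ‖u‖ = 1 := by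
      rw [hu, norm_smul, norm_inv, norm_norm, inv_mul_cancel₀ hv0norm]
    have hu0 : u ≠ 0 := by
      intro h
      rw [h, norm_zero] at hunorm
      norm_num at hunorm
    have huPlo : u ∈ Plᗮ := Plᗮ.smul_mem _ v0.2
    have huspan : ∀ z ∈ Plᗮ, ∃ c : ℝ, z = c • u := by
      intro z hz
      obtain ⟨c, hc⟩ := hv0span ⟨z, hz⟩
      refine ⟨c * ‖(v0 : EuclideanSpace ℝ (Fin n))‖, ?_⟩
      have hc' : c • (v0 : EuclideanSpace ℝ (Fin n)) = z := congrArg Subtype.val hc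
      rw [← hc', hu, smul_smul, mul_assoc, mul_inv_cancel₀ hv0norm, mul_one]
    set t : EuclideanSpace ℝ (Fin n) → ℝ := fun y => ⟪u, y⟫ with ht
    have htuu : ⟪u, u⟫ = 1 := by
      rw [real_inner_self_eq_norm_sq, hunorm]; norm_num
    have htPl : ∀ y, y ∈ Pl ↔ t y = 0 := by
      intro y
      constructor
      · intro hy
        have := (Submodule.mem_orthogonal Pl u).mp huPlo y hy
        rwa [real_inner_comm] at this
      · intro hy
        rw [← Submodule.orthogonal_orthogonal Pl]
        refine (Submodule.mem_orthogonal _ y).mpr ?_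
        intro z hz
        obtain ⟨c, rfl⟩ := huspan z hz
        rw [real_inner_smul_left]
        simp only [ht] at hy
        rw [hy, mul_zero]
    have hdecomp : ∀ y : EuclideanSpace ℝ (Fin n),
        y - (orthogonalProjection Pl y : EuclideanSpace ℝ (Fin n)) = t y • u := by
      intro y
      obtain ⟨c, hc⟩ := huspan _ (by have := Submodule.sub_starProjection_mem_orthogonal (K := Pl) y; rwa [Submodule.starProjection_apply] at this)
      have h0 : ⟪u, (orthogonalProjection Pl y : EuclideanSpace ℝ (Fin n))⟫ = 0 :=
        (htPl _).mp (coe_mem _)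
      have hcval : t y = c := by
        have h1 : ⟪u, y - (orthogonalProjection Pl y : EuclideanSpace ℝ (Fin n))⟫ = c := by
          rw [hc, real_inner_smul_right, htuu, mul_one]
        rw [inner_sub_right, h0, sub_zero] at h1
        exact h1
      rw [hc, hcval]
    have hinfd : ∀ y : EuclideanSpace ℝ (Fin n),
        infDist y (Pl : Set (EuclideanSpace ℝ (Fin n))) = |t y| := by
      intro y
      rw [Metric.infDist_eq_iInf]
      simp_rw [dist_eq_norm]
      rw [show (⨅ (z : ↥(Pl : Set (EuclideanSpace ℝ (Fin n)))), ‖y - ↑z‖)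
            = ⨅ (z : ↥Pl), ‖y - ↑z‖ from rfl,
        ← Submodule.starProjection_minimal, Submodule.starProjection_apply, hdecomp, norm_smul, hunorm, mul_one,
        Real.norm_eq_abs]
    have h2t : ∀ y ∈ L, (2 * t y) • u ∈ L := by
      intro y hy
      have h1 : y - Pl.reflection y ∈ L := L.sub_mem hy (hRmem y hy)
      have h2 : y - Pl.reflection y = (2 * t y) • u := by
        rw [hsub2 y, hdecomp y, two_mul, add_smul]
      rwa [h2] at h1
    obtain ⟨ε, hε, hball⟩ : ∃ ε > 0, ∀ y ∈ L, ‖y‖ < ε → y = 0 := by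
      obtain ⟨ε, hε, hb2⟩ := Metric.isOpen_iff.mp (isOpen_discrete {(0 : ↥Lz)}) 0 rfl
      refine ⟨ε, hε, fun y hy hny => ?_⟩
      have hmem : (⟨y, (hmemL y).mp hy⟩ : ↥Lz) ∈ Metric.ball (0 : ↥Lz) ε := by
        rw [Metric.mem_ball, Subtype.dist_eq]
        simpa [dist_eq_norm] using hny
      have := hb2 hmem
      simpa [Subtype.ext_iff] using this
    set φ : EuclideanSpace ℝ (Fin n) →+ ℝ :=
      AddMonoidHom.mk' t (fun a c => inner_add_right u a c) with hφ
    set G : AddSubgroup ℝ := AddSubgroup.map φ L with hG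
    have hGmem : ∀ y ∈ L, t y ∈ G := fun y hy => ⟨y, hy, rfl⟩
    rcases AddSubgroup.dense_or_cyclic G with hd | ⟨d, hGd⟩
    · exfalso
      obtain ⟨g, hgG, hgnear⟩ : ∃ g ∈ G, dist (ε/8) g < ε/16 :=
        Metric.mem_closure_iff.mp (hd (ε/8)) (ε/16) (by positivity)
      rw [Real.dist_eq] at hgnear
      have hglb : ε/16 < g ∧ g < 3*ε/16 := by
        rw [abs_lt] at hgnear
        constructor <;> linarith [hgnear.1, hgnear.2]
      obtain ⟨y, hyL, hyt⟩ := hgG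
      have h1 : (2 * g) • u ∈ L := by
        rw [← hyt]
        exact h2t y hyL
      have h2 : ‖(2 * g) • u‖ < ε := by
        rw [norm_smul, hunorm, mul_one, Real.norm_eq_abs, abs_of_pos (by linarith [hglb.1])]
        linarith [hglb.2]
      have h3 := hball _ h1 h2
      rw [smul_eq_zero] at h3
      rcases h3 with h3 | h3
      · linarith [hglb.1]
      · exact hu0 h3
    · have hwt : t w ≠ 0 := fun h => hwPl ((htPl w).mpr h)
      have hwG : t w ∈ G := hGmem w hwL
      rw [hGd] at hwG
      obtain ⟨m, hm⟩ := AddSubgroup.mem_closure_singleton.mp hwG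
      have hd0 : d ≠ 0 := by
        intro h
        rw [h, smul_zero] at hm
        exact hwt hm.symm
      have hdG : d ∈ G := by
        rw [hGd]
        exact AddSubgroup.mem_closure_singleton.mpr ⟨1, one_zsmul d⟩
      obtain ⟨y, hyL, hyt⟩ := hdG
      have hyPl : y ∉ Pl := by
        intro h
        exact hd0 (by rw [← hyt]; exact (htPl y).mp h)
      have hmin' := hmin y hyL hyPl
      rw [hinfd, hinfd] at hmin'
      have hty : t y = d := hyt
      rw [hty] at hmin'
      have hm0 : m ≠ 0 := by
        intro h
        rw [h, zero_zsmul] at hm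
        exact hwt hm.symm
      have htw : |t w| = |(m : ℝ)| * |d| := by
        rw [← hm, zsmul_eq_mul, abs_mul]
      have hm1 : m = 1 ∨ m = -1 := by
        have h1 : (1:ℝ) ≤ |(m:ℝ)| := by
          rw [← Int.cast_abs]
          exact_mod_cast Int.one_le_abs hm0
        have h2 : |(m:ℝ)| * |d| ≤ |d| := by rw [← htw]; exact hmin'
        have h3 : |(m:ℝ)| ≤ 1 := by
          by_contra hcon
          push_neg at hcon
          have : |d| < |(m:ℝ)| * |d| := by
            nlinarith [abs_pos.mpr hd0]
          linarith
        have h4 : |(m:ℝ)| = 1 := le_antisymm h3 h1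
        have h5 : ((|m| : ℤ) : ℝ) = 1 := by rw [Int.cast_abs]; exact h4
        have h6 : |m| = 1 := by exact_mod_cast h5
        rw [Int.abs_eq_natAbs] at h6
        omega
      have hkey : ∀ g ∈ G, ∃ k : ℤ, g = (k : ℝ) * t w := by
        intro g hg
        rw [hGd] at hg
        obtain ⟨k', hk'⟩ := AddSubgroup.mem_closure_singleton.mp hg
        rcases hm1 with rfl | rfl
        · refine ⟨k', ?_⟩
          rw [← hk', ← hm]
          simp only [zsmul_eq_mul]
          push_cast
          ring
        · refine ⟨-k', ?_⟩
          rw [← hk', ← hm]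
          simp only [zsmul_eq_mul]
          push_cast
          ring
      constructor
      · intro hxL
        obtain ⟨k, hk⟩ := hkey (t x) (hGmem x hxL)
        refine ⟨k, AddSubgroup.mem_inf.mpr ⟨L.sub_mem hxL (AddSubgroup.zsmul_mem L hwL k), ?_⟩⟩
        rw [Submodule.mem_toAddSubgroup]
        refine (htPl _).mpr ?_
        have hcalc : t (x - k • w) = t x - (k : ℝ) * t w := by
          simp only [ht]
          rw [inner_sub_right, ← Int.cast_smul_eq_zsmul ℝ k w, real_inner_smul_right]
        rw [hcalc, hk, sub_self]
      · rintro ⟨k, hk⟩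
        have hk1 := (AddSubgroup.mem_inf.mp hk).1
        have hx : x = (x - k • w) + k • w := by abel
        rw [hx]
        exact L.add_mem hk1 (AddSubgroup.zsmul_mem L hwL k)
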